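/- arXiv:1712.08209 — 5 statements merged into one kernel-verified Lean document; each statement's English description precedes it below -/
import Mathlib

section
/- Suppose x : ℝ → ℝⁿ solves ẋ = f(x,u(t)), φ : ℝⁿ → ℝ^{n_ξ} satisfies the PDE ∇φ(x)ᵀ f(x,v) = Λ φ(x) + B(h(x),v) for all x and v, and ξ : ℝ → ℝ^{n_ξ} solves ξ̇ = Λ ξ + B(h(x(t)),u(t)). Then the error e(t) := ξ(t) − φ(x(t)) satisfies ė(t) = Λ e(t), and hence if Λ is diagonal with negative entries, e(t) → 0 as t → ∞. -/
lemma aux_scalar {g : ℝ → ℝ} {c : ℝ} (hg : ∀ t, HasDerivAt g (c * g t) t)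
    (hc : c < 0) : Filter.Tendsto g Filter.atTop (nhds 0) := by
  have hG : ∀ t, HasDerivAt (fun s => g s * Real.exp (-c * s)) 0 t := by
    intro t
    have he : HasDerivAt (fun s => Real.exp (-c * s)) (-c * Real.exp (-c * t)) t := by
      simpa [mul_comm] using ((hasDerivAt_id t).const_mul (-c)).exp
    have := (hg t).mul he
    refine HasDerivAt.congr_deriv this ?_
    ring
  have hconst : ∀ t, g t * Real.exp (-c * t) = g 0 := by
    intro t
    have := is_const_of_deriv_eq_zero (f := fun s => g s * Real.exp (-c * s))
      (fun s => (hG s).differentiableAt) (fun s => (hG s).deriv) t 0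
    simpa using this
  have key : ∀ t, g t = g 0 * Real.exp (c * t) := by
    intro t
    have h1 : Real.exp (-c * t) * Real.exp (c * t) = 1 := by
      rw [← Real.exp_add]; ring_nf; exact Real.exp_zero
    calc g t = g t * (Real.exp (-c * t) * Real.exp (c * t)) := by rw [h1]; ring
    _ = (g t * Real.exp (-c * t)) * Real.exp (c * t) := by ring
    _ = g 0 * Real.exp (c * t) := by rw [hconst t]
  have hlim : Filter.Tendsto (fun t => g 0 * Real.exp (c * t)) Filter.atTop (nhds 0) := by
    have : Filter.Tendsto (fun t : ℝ => c * t) Filter.atTop Filter.atBot :=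
      Filter.Tendsto.const_mul_atTop_of_neg hc Filter.tendsto_id
    have := Real.tendsto_exp_atBot.comp this
    simpa using this.const_mul (g 0)
  exact hlim.congr (fun t => (key t).symm)


/-- Correctness of the Kazantzis–Kravaris–Luenberger observer (Proposition 1):
the error `e = ξ - φ ∘ x` satisfies `ė = Λ e`, and if `Λ` is diagonal with
strictly negative entries then `e(t) → 0`. -/
theorem stmt_1 {n m p nξ : ℕ}
    (f : (Fin n → ℝ) → (Fin m → ℝ) → (Fin n → ℝ))
    (h : (Fin n → ℝ) → (Fin p → ℝ))
    (B : (Fin p → ℝ) → (Fin m → ℝ) → (Fin nξ → ℝ))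
    (Λ : Matrix (Fin nξ) (Fin nξ) ℝ)
    (φ : (Fin n → ℝ) → (Fin nξ → ℝ)) (hφ : Differentiable ℝ φ)
    (hPDE : ∀ (z : Fin n → ℝ) (v : Fin m → ℝ),
      fderiv ℝ φ z (f z v) = Λ.mulVec (φ z) + B (h z) v)
    (u : ℝ → (Fin m → ℝ))
    (x : ℝ → (Fin n → ℝ)) (ξ : ℝ → (Fin nξ → ℝ))
    (hx : ∀ t : ℝ, HasDerivAt x (f (x t) (u t)) t)
    (hξ : ∀ t : ℝ, HasDerivAt ξ (Λ.mulVec (ξ t) + B (h (x t)) (u t)) t) :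
    (∀ t : ℝ, HasDerivAt (fun s => ξ s - φ (x s)) (Λ.mulVec (ξ t - φ (x t))) t) ∧
    (∀ d : Fin nξ → ℝ, Λ = Matrix.diagonal d → (∀ i, d i < 0) →
      Filter.Tendsto (fun t => ξ t - φ (x t)) Filter.atTop (nhds 0)) := by
  have he : ∀ t : ℝ, HasDerivAt (fun s => ξ s - φ (x s)) (Λ.mulVec (ξ t - φ (x t))) t := by
    intro t
    have hcomp : HasDerivAt (fun s => φ (x s)) (fderiv ℝ φ (x t) (f (x t) (u t))) t :=
      (hφ (x t)).hasFDerivAt.comp_hasDerivAt t (hx t)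
    have := (hξ t).sub hcomp
    rw [hPDE (x t) (u t)] at this
    refine HasDerivAt.congr_deriv this ?_
    rw [Matrix.mulVec_sub]
    abel
  refine ⟨he, fun d hΛ hd => ?_⟩
  subst hΛ
  rw [tendsto_pi_nhds]
  intro i
  have hi : ∀ t, HasDerivAt (fun s => ξ s i - φ (x s) i) (d i * (ξ t i - φ (x t) i)) t := by
    intro t
    have := (hasDerivAt_pi.mp (he t)) i
    simpa [Matrix.mulVec_diagonal] using this
  simpa using aux_scalar hi (hd i)
end

section
/- Combined KKL+PEB error convergence: assume φ : ℝⁿ → ℝ^{n_ξ} satisfies ∇φ(x)ᵀ f(x,v) = Λ φ(x) + B(h(x),v) with block-diagonal Λ = diag(Λ_L, 0), where Λ_L = diag(λ₁,…,λ_q) with λᵢ < 0. Partition φ = (φ_L, φ_P) and B = (B_L, B_P) accordingly. If x solves ẋ = f(x,u(t)), ξ_L solves ξ̇_L = Λ_L ξ_L + B_L(h(x),u) and ξ_P solves ξ̇_P = B_P(h(x),u), then ξ_L(t) − φ_L(x(t)) → 0 as t → ∞ and ξ_P(t) − φ_P(x(t)) is constant in t. -/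
open Real Filter

-- constancy on Ici from zero deriv
lemma const_of_deriv_zero (g : ℝ → ℝ) (hg : ∀ t : ℝ, 0 ≤ t → HasDerivAt g 0 t) :
    ∀ t : ℝ, 0 ≤ t → g t = g 0 := by
  intro t ht
  have := constant_of_has_deriv_right_zero (f := g) (a := 0) (b := t)
    (fun s hs => (hg s hs.1).continuousAt.continuousWithinAt)
    (fun s hs => ((hg s hs.1).hasDerivWithinAt))
  exact this t ⟨ht, le_rfl⟩

lemma exp_sol (c : ℝ) (g : ℝ → ℝ) (hg : ∀ t : ℝ, 0 ≤ t → HasDerivAt g (c * g t) t) :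
    ∀ t : ℝ, 0 ≤ t → g t = g 0 * Real.exp (c * t) := by
  have key : ∀ t : ℝ, 0 ≤ t → Real.exp (-c * t) * g t = Real.exp (-c * 0) * g 0 := by
    apply const_of_deriv_zero
    intro t ht
    have h1 : HasDerivAt (fun t => Real.exp (-c * t)) (-c * Real.exp (-c * t)) t := by
      simpa [mul_comm] using ((hasDerivAt_id t).const_mul (-c)).exp
    have := h1.mul (hg t ht)
    refine this.congr_deriv ?_
    ring
  intro t ht
  have h2 := key t ht
  have h3 : Real.exp (-c * t) ≠ 0 := (Real.exp_pos _).ne'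
  field_simp [Real.exp_neg, neg_mul] at h2 ⊢
  have h4 : Real.exp (-(c * t)) * Real.exp (c * t) = 1 := by rw [← Real.exp_add]; simp
  simp only [mul_zero, neg_zero, Real.exp_zero, one_mul] at h2
  linear_combination Real.exp (c * t) * h2 - g t * h4
/-- Core of Proposition 3 ([KKL+PEB] observer): the KKL part of the error
converges to zero and the PEB part of the error is constant. -/
theorem stmt_3 {n m p q r : ℕ}
    (f : (Fin n → ℝ) → (Fin m → ℝ) → (Fin n → ℝ))
    (h : (Fin n → ℝ) → (Fin p → ℝ))
    (BL : (Fin p → ℝ) → (Fin m → ℝ) → (Fin q → ℝ))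
    (BP : (Fin p → ℝ) → (Fin m → ℝ) → (Fin r → ℝ))
    (ΛL : Matrix (Fin q) (Fin q) ℝ) (d : Fin q → ℝ)
    (hΛ : ΛL = Matrix.diagonal d) (hd : ∀ i, d i < 0)
    (φL : (Fin n → ℝ) → (Fin q → ℝ)) (hφL : Differentiable ℝ φL)
    (φP : (Fin n → ℝ) → (Fin r → ℝ)) (hφP : Differentiable ℝ φP)
    (hPDEL : ∀ (z : Fin n → ℝ) (v : Fin m → ℝ),
      fderiv ℝ φL z (f z v) = ΛL.mulVec (φL z) + BL (h z) v)
    (hPDEP : ∀ (z : Fin n → ℝ) (v : Fin m → ℝ),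
      fderiv ℝ φP z (f z v) = BP (h z) v)
    (u : ℝ → (Fin m → ℝ))
    (x : ℝ → (Fin n → ℝ)) (ξL : ℝ → (Fin q → ℝ)) (ξP : ℝ → (Fin r → ℝ))
    (hx : ∀ t : ℝ, 0 ≤ t → HasDerivAt x (f (x t) (u t)) t)
    (hξL : ∀ t : ℝ, 0 ≤ t → HasDerivAt ξL (ΛL.mulVec (ξL t) + BL (h (x t)) (u t)) t)
    (hξP : ∀ t : ℝ, 0 ≤ t → HasDerivAt ξP (BP (h (x t)) (u t)) t) :
    Filter.Tendsto (fun t => ξL t - φL (x t)) Filter.atTop (nhds 0) ∧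
    (∀ s t : ℝ, 0 ≤ s → 0 ≤ t →
      ξP s - φP (x s) = ξP t - φP (x t)) := by
  -- derivative of φL ∘ x and φP ∘ x
  have hφLx : ∀ t : ℝ, 0 ≤ t →
      HasDerivAt (fun t => φL (x t)) (ΛL.mulVec (φL (x t)) + BL (h (x t)) (u t)) t := by
    intro t ht
    have := (hφL (x t)).hasFDerivAt.comp_hasDerivAt t (hx t ht)
    rwa [hPDEL] at this
  have hφPx : ∀ t : ℝ, 0 ≤ t →
      HasDerivAt (fun t => φP (x t)) (BP (h (x t)) (u t)) t := by
    intro t ht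
    have := (hφP (x t)).hasFDerivAt.comp_hasDerivAt t (hx t ht)
    rwa [hPDEP] at this
  constructor
  · -- KKL part
    set e : ℝ → (Fin q → ℝ) := fun t => ξL t - φL (x t) with he
    have hei : ∀ (i : Fin q) (t : ℝ), 0 ≤ t →
        HasDerivAt (fun t => e t i) (d i * e t i) t := by
      intro i t ht
      have h1 := ((hξL t ht).sub (hφLx t ht))
      have h2 : HasDerivAt (fun t => e t i)
          ((ΛL.mulVec (ξL t) + BL (h (x t)) (u t)
            - (ΛL.mulVec (φL (x t)) + BL (h (x t)) (u t))) i) t := by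
        have := (ContinuousLinearMap.proj (R := ℝ)
          (φ := fun _ : Fin q => ℝ) i).hasFDerivAt.comp_hasDerivAt t h1
        simpa [Function.comp_def, he] using this
      have h3 : (ΛL.mulVec (ξL t) + BL (h (x t)) (u t)
            - (ΛL.mulVec (φL (x t)) + BL (h (x t)) (u t))) i = d i * e t i := by
        simp [hΛ, Matrix.mulVec_diagonal, he]
        ring
      rwa [h3] at h2
    have hformula : ∀ (i : Fin q) (t : ℝ), 0 ≤ t →
        e t i = e 0 i * Real.exp (d i * t) :=
      fun i => exp_sol (d i) (fun t => e t i) (hei i)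
    rw [tendsto_pi_nhds]
    intro i
    have htend : Filter.Tendsto (fun t => e 0 i * Real.exp (d i * t))
        Filter.atTop (nhds 0) := by
      have hexp : Filter.Tendsto (fun t => Real.exp (d i * t)) Filter.atTop (nhds 0) :=
        Real.tendsto_exp_atBot.comp (Filter.Tendsto.const_mul_atTop_of_neg (hd i) Filter.tendsto_id)
      simpa using hexp.const_mul (e 0 i)
    refine htend.congr' ?_
    filter_upwards [Filter.eventually_ge_atTop (0:ℝ)] with t ht
    exact (hformula i t ht).symm
  · -- PEB part
    intro s t hs ht
    funext i
    have hci : ∀ (i : Fin r) (t : ℝ), 0 ≤ t →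
        HasDerivAt (fun t => ξP t i - φP (x t) i) 0 t := by
      intro i t ht
      have h1 := (hξP t ht).sub (hφPx t ht)
      have h2 := (ContinuousLinearMap.proj (R := ℝ)
          (φ := fun _ : Fin r => ℝ) i).hasFDerivAt.comp_hasDerivAt t h1
      simpa [Function.comp_def] using h2
    have := const_of_deriv_zero _ (hci i)
    simp only [Pi.sub_apply]
    rw [this s hs, this t ht]
end

section
/- Persistency of excitation implies exponential convergence: let ψ : [0,∞) → ℝⁿ be continuous and bounded, and assume there exist δ, T > 0 with ∫_t^{t+T} ψ(s) ψ(s)ᵀ ds ⪰ δ Iₙ (as positive semidefinite matrices) for all t ≥ 0. Then for any symmetric positive definite Γ, every solution of θ̃̇ = −Γ ψ(t) ψ(t)ᵀ θ̃ converges to 0 as t → ∞. -/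
open Filter MeasureTheory intervalIntegral Matrix

/-- Persistency of excitation implies convergence of the gradient estimator.
The Loewner inequality `∫_t^{t+T} ψψᵀ ⪰ δ I` is stated via quadratic forms. -/
theorem stmt_5 {n : ℕ}
    (ψ : ℝ → EuclideanSpace ℝ (Fin n))
    (hψcont : Continuous ψ) (hψbdd : ∃ Cψ : ℝ, ∀ t : ℝ, ‖ψ t‖ ≤ Cψ)
    (δ T : ℝ) (hδ : 0 < δ) (hT : 0 < T)
    (hPE : ∀ t : ℝ, 0 ≤ t → ∀ v : EuclideanSpace ℝ (Fin n),
      δ * ‖v‖ ^ 2 ≤ ∫ s in t..(t + T), (∑ i, ψ s i * v i) ^ 2)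
    (Γ : Matrix (Fin n) (Fin n) ℝ) (hΓ : Γ.PosDef) (hΓsymm : Γ.IsSymm)
    (θ : ℝ → EuclideanSpace ℝ (Fin n))
    (hθ : ∀ t : ℝ, 0 ≤ t →
      HasDerivAt θ
        (-(WithLp.toLp 2 (Γ.mulVec ((dotProduct (ψ t).ofLp (θ t).ofLp) • ((ψ t).ofLp : Fin n → ℝ)))) :
          EuclideanSpace ℝ (Fin n)) t) :
    Filter.Tendsto θ Filter.atTop (nhds 0) := by
  obtain ⟨Cψ, hCψ⟩ := hψbdd
  have hCψ0 : 0 ≤ Cψ := le_trans (norm_nonneg _) (hCψ 0)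
  set g : ℝ → ℝ := fun t => ∑ i, ψ t i * θ t i with hgdef
  set A : Matrix (Fin n) (Fin n) ℝ := Γ⁻¹ with hAdef
  have hApd : A.PosDef := hΓ.inv
  have hAsymm : Aᵀ = A := by rw [hAdef, Matrix.transpose_nonsing_inv, hΓsymm]
  have hθcont : ContinuousOn θ (Set.Ici (0:ℝ)) :=
    fun t ht => ((hθ t ht).continuousAt).continuousWithinAt
  have hθd : ∀ (i : Fin n) (t : ℝ), 0 ≤ t →
      HasDerivAt (fun u => θ u i) (-(g t * Γ.mulVec (ψ t) i)) t := by
    intro i t ht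
    have h := (EuclideanSpace.proj (𝕜 := ℝ) i).hasFDerivAt.comp_hasDerivAt t (hθ t ht)
    convert h using 1
    show _ = (EuclideanSpace.proj (𝕜 := ℝ) i) _
    rw [Matrix.mulVec_smul]
    simp [hgdef, dotProduct]
    all_goals rfl
  have hgcont : ContinuousOn g (Set.Ici (0:ℝ)) := by
    apply continuousOn_finset_sum
    intro i _
    exact (((EuclideanSpace.proj (𝕜 := ℝ) i).continuous.comp hψcont).continuousOn).mul
      ((EuclideanSpace.proj (𝕜 := ℝ) i).continuous.comp_continuousOn hθcont)
  set V : ℝ → ℝ := fun t => ∑ i, ∑ j, θ t i * (A i j * θ t j) with hVdef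
  have hVd : ∀ t : ℝ, 0 ≤ t → HasDerivAt V (-2 * (g t)^2) t := by
    intro t ht
    have hD : HasDerivAt V (∑ i, ∑ j, (-(g t * Γ.mulVec (ψ t) i) * (A i j * θ t j)
        + θ t i * (A i j * -(g t * Γ.mulVec (ψ t) j)))) t := by
      apply HasDerivAt.fun_sum
      intro i _
      apply HasDerivAt.fun_sum
      intro j _
      exact (hθd i t ht).mul ((hθd j t ht).const_mul (A i j))
    convert hD using 1
    -- matrix algebra
    have hdet : IsUnit Γ.det := hΓ.det_pos.ne'.isUnit
    have hgc : g t = (ψ t : Fin n → ℝ) ⬝ᵥ (θ t : Fin n → ℝ) := rfl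
    set ψv : Fin n → ℝ := (ψ t).ofLp
    set x : Fin n → ℝ := (θ t).ofLp
    have h1 : ∀ y : Fin n → ℝ, (Γ *ᵥ ψv) ⬝ᵥ y = ψv ⬝ᵥ (Γᵀ *ᵥ y) := by
      intro y
      rw [dotProduct_comm, Matrix.dotProduct_mulVec, Matrix.mulVec_transpose,
        dotProduct_comm]
    have hkey : (Γ *ᵥ ψv) ⬝ᵥ (A *ᵥ x) = g t := by
      rw [h1, hΓsymm, Matrix.mulVec_mulVec, Matrix.mul_nonsing_inv Γ hdet,
        Matrix.one_mulVec, hgc]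
    have hkey2 : x ⬝ᵥ (A *ᵥ (Γ *ᵥ ψv)) = g t := by
      rw [Matrix.dotProduct_mulVec, ← Matrix.mulVec_transpose, hAsymm, dotProduct_comm]
      exact hkey
    have hsum1 : ∀ y z : Fin n → ℝ, ∑ i, ∑ j, y i * (A i j * z j) = y ⬝ᵥ (A *ᵥ z) := by
      intro y z
      simp [dotProduct, Matrix.mulVec, Finset.mul_sum]
    set w : Fin n → ℝ := Γ *ᵥ ψv with hw
    have : ∑ i, ∑ j, (-(g t * w i) * (A i j * x j) + x i * (A i j * -(g t * w j)))
        = -2 * (g t)^2 := by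
      calc ∑ i, ∑ j, (-(g t * w i) * (A i j * x j) + x i * (A i j * -(g t * w j)))
          = -(g t) * ∑ i, ∑ j, w i * (A i j * x j)
            + -(g t) * ∑ i, ∑ j, x i * (A i j * w j) := by
            simp only [Finset.mul_sum, ← Finset.sum_add_distrib]
            exact Finset.sum_congr rfl fun i _ => Finset.sum_congr rfl fun j _ => by ring
        _ = -2 * (g t)^2 := by rw [hsum1, hsum1, hkey, hkey2]; ring
    rw [← this]
  have hVnonneg : ∀ t, 0 ≤ V t := by
    intro t
    have h := hApd.posSemidef.dotProduct_mulVec_nonneg (θ t).ofLp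
    simpa [hVdef, dotProduct, Matrix.mulVec, Finset.mul_sum] using h
  have hVcont : ContinuousOn V (Set.Ici (0:ℝ)) :=
    fun t ht => ((hVd t ht).continuousAt).continuousWithinAt
  have hVanti : AntitoneOn V (Set.Ici (0:ℝ)) := by
    apply antitoneOn_of_deriv_nonpos (convex_Ici 0) hVcont
    · intro x hx
      rw [interior_Ici] at hx
      exact ((hVd x (le_of_lt hx)).differentiableAt).differentiableWithinAt
    · intro x hx
      rw [interior_Ici] at hx
      rw [(hVd x (le_of_lt hx)).deriv]
      nlinarith [sq_nonneg (g x)]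
  set I : ℝ → ℝ := fun t => ∫ s in t..(t+T), (g s)^2 with hIdef
  have huIcc : ∀ a b : ℝ, 0 ≤ a → 0 ≤ b → Set.uIcc a b ⊆ Set.Ici (0:ℝ) := by
    intro a b ha hb x hx
    rw [Set.uIcc, Set.mem_Icc] at hx
    exact le_trans (le_inf ha hb) hx.1
  have hg2int : ∀ a b : ℝ, 0 ≤ a → 0 ≤ b → IntervalIntegrable (fun s => (g s)^2) volume a b := by
    intro a b ha hb
    exact ((hgcont.mono (huIcc a b ha hb)).pow 2).intervalIntegrable
  have hIeq : ∀ t : ℝ, 0 ≤ t → I t = (V t - V (t+T))/2 := by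
    intro t ht
    have hsub : Set.uIcc t (t+T) ⊆ Set.Ici (0:ℝ) := huIcc t (t+T) ht (by linarith)
    have hftc : ∫ s in t..(t+T), (-2 * (g s)^2) = V (t+T) - V t := by
      apply intervalIntegral.integral_eq_sub_of_hasDerivAt
      · intro x hx
        exact hVd x (hsub hx)
      · exact (hg2int t (t+T) ht (by linarith)).const_mul (-2)
    have hlin : ∫ s in t..(t+T), (-2 * (g s)^2) = -2 * I t := by
      rw [hIdef]
      exact intervalIntegral.integral_const_mul (-2) _
    rw [hlin] at hftc
    linarith
  have hInonneg : ∀ t : ℝ, 0 ≤ t → 0 ≤ I t := by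
    intro t ht
    exact intervalIntegral.integral_nonneg (by linarith) (fun u _ => sq_nonneg _)
  have hItend : Tendsto I atTop (nhds 0) := by
    set W : ℝ → ℝ := fun t => V (max t 0) with hWdef
    have hWanti : Antitone W := by
      intro a b hab
      exact hVanti (Set.mem_Ici.2 (le_max_right a 0)) (Set.mem_Ici.2 (le_max_right b 0))
        (max_le_max hab le_rfl)
    have hWbdd : BddBelow (Set.range W) := by
      refine ⟨0, ?_⟩
      rintro x ⟨u, rfl⟩
      exact hVnonneg _
    have hWtend : Tendsto W atTop (nhds (⨅ u, W u)) := tendsto_atTop_ciInf hWanti hWbdd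
    have hVW : W =ᶠ[atTop] V := by
      filter_upwards [eventually_ge_atTop (0:ℝ)] with u hu
      simp [hWdef, max_eq_left hu]
    have hVtend : Tendsto V atTop (nhds (⨅ u, W u)) := hWtend.congr' hVW
    have hVtend' : Tendsto (fun t => V (t + T)) atTop (nhds (⨅ u, W u)) :=
      hVtend.comp (tendsto_atTop_add_const_right atTop T tendsto_id)
    have h0 : Tendsto (fun t => (V t - V (t+T))/2) atTop (nhds 0) := by
      have := (hVtend.sub hVtend').div_const 2
      simpa using this
    apply h0.congr'
    filter_upwards [eventually_ge_atTop (0:ℝ)] with u hu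
    exact (hIeq u hu).symm
  set K : ℝ := (∑ i, ∑ j, |Γ i j|) * Cψ^2 with hKdef
  have hK0 : 0 ≤ K := by
    apply mul_nonneg _ (sq_nonneg _)
    exact Finset.sum_nonneg fun i _ => Finset.sum_nonneg fun j _ => abs_nonneg _
  have hcoord : ∀ (s : ℝ) (i : Fin n), |ψ s i| ≤ Cψ := by
    intro s i
    refine le_trans ?_ (hCψ s)
    rw [EuclideanSpace.norm_eq, ← Real.sqrt_sq_eq_abs]
    apply Real.sqrt_le_sqrt
    have : |ψ s i| ^ 2 ≤ ∑ j, ‖ψ s j‖ ^ 2 := by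
      refine Finset.single_le_sum (f := fun j => ‖ψ s j‖^2) (fun j _ => sq_nonneg _)
        (Finset.mem_univ i) |>.trans_eq' ?_
      simp [sq_abs]
    simpa [sq_abs] using this
  have hgb : ∀ s u : ℝ, |∑ i, ψ s i * (-(g u * Γ.mulVec (ψ u) i))| ≤ K * |g u| := by
    intro s u
    have h1 : ∀ i, |ψ s i * (-(g u * Γ.mulVec (ψ u) i))|
        ≤ Cψ * (|g u| * ∑ j, |Γ i j| * Cψ) := by
      intro i
      rw [abs_mul]
      apply mul_le_mul (hcoord s i) _ (abs_nonneg _) hCψ0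
      rw [abs_neg, abs_mul]
      apply mul_le_mul_of_nonneg_left _ (abs_nonneg _)
      have hmv : Γ.mulVec (ψ u) i = ∑ j, Γ i j * ψ u j := rfl
      rw [hmv]
      calc |∑ j, Γ i j * ψ u j| ≤ ∑ j, |Γ i j * ψ u j| :=
            Finset.abs_sum_le_sum_abs _ _
        _ ≤ ∑ j, |Γ i j| * Cψ := by
            apply Finset.sum_le_sum
            intro j _
            rw [abs_mul]
            exact mul_le_mul_of_nonneg_left (hcoord u j) (abs_nonneg _)
    calc |∑ i, ψ s i * (-(g u * Γ.mulVec (ψ u) i))|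
        ≤ ∑ i, |ψ s i * (-(g u * Γ.mulVec (ψ u) i))| := Finset.abs_sum_le_sum_abs _ _
      _ ≤ ∑ i, Cψ * (|g u| * ∑ j, |Γ i j| * Cψ) := Finset.sum_le_sum fun i _ => h1 i
      _ = K * |g u| := by
          rw [hKdef]
          simp only [Finset.mul_sum, Finset.sum_mul]
          apply Finset.sum_congr rfl
          intro i _
          apply Finset.sum_congr rfl
          intro j _
          ring
  have hΓcoordcont : ∀ i : Fin n, Continuous (fun u => Γ.mulVec (ψ u) i) := by
    intro i
    show Continuous fun u => ∑ j, Γ i j * ψ u j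
    exact continuous_finset_sum _ fun j _ =>
      continuous_const.mul ((EuclideanSpace.proj (𝕜 := ℝ) j).continuous.comp hψcont)
  have hkey' : ∀ t : ℝ, 0 ≤ t → ∀ η : ℝ, 0 < η →
      δ * ‖θ t‖^2 ≤ 2*(I t) + 2*T*(K*(I t/(2*η) + η*T/2))^2 := by
    intro t ht η hη
    have hsub : Set.uIcc t (t+T) ⊆ Set.Ici (0:ℝ) := huIcc t (t+T) ht (by linarith)
    have hgconts : ContinuousOn g (Set.uIcc t (t+T)) := hgcont.mono hsub
    have hgI : IntervalIntegrable g volume t (t+T) := hgconts.intervalIntegrable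
    have habsI : IntervalIntegrable (fun s => |g s|) volume t (t+T) := hgI.abs
    have hg2I : IntervalIntegrable (fun s => (g s)^2) volume t (t+T) :=
      hg2int t (t+T) ht (by linarith)
    have httT : t ≤ t + T := by linarith
    set M : ℝ := K * (I t/(2*η) + η*T/2) with hMdef
    -- step 1 : L¹ bound on |g|
    have habs_int : ∫ s in t..(t+T), |g s| ≤ I t/(2*η) + η*T/2 := by
      have hptwise : ∀ s ∈ Set.Icc t (t+T), |g s| ≤ (g s)^2/(2*η) + η/2 := by
        intro s _
        rw [div_add_div _ _ (by positivity) (by norm_num : (2:ℝ) ≠ 0),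
          le_div_iff₀ (by positivity)]
        nlinarith [sq_nonneg (|g s| - η), sq_abs (g s)]
      have hRHSI : IntervalIntegrable (fun s => (g s)^2/(2*η) + η/2) volume t (t+T) :=
        (hg2I.div_const (2*η)).add intervalIntegrable_const
      calc ∫ s in t..(t+T), |g s| ≤ ∫ s in t..(t+T), ((g s)^2/(2*η) + η/2) :=
            intervalIntegral.integral_mono_on httT habsI hRHSI hptwise
        _ = I t/(2*η) + η*T/2 := by
            rw [intervalIntegral.integral_add (hg2I.div_const (2*η)) intervalIntegrable_const,
              intervalIntegral.integral_div, intervalIntegral.integral_const]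
            rw [hIdef]
            simp
            ring
    -- step 2 : perturbation bound
    have hdiff : ∀ s : ℝ, t ≤ s → s ≤ t + T → |∑ i, ψ s i * (θ s i - θ t i)| ≤ M := by
      intro s hts hst
      have hsub2 : Set.uIcc t s ⊆ Set.Ici (0:ℝ) := huIcc t s ht (le_trans ht hts)
      have hintc : ∀ i : Fin n, ContinuousOn (fun u => -(g u * Γ.mulVec (ψ u) i))
          (Set.uIcc t s) := fun i =>
        ((hgcont.mono hsub2).mul ((hΓcoordcont i).continuousOn)).neg
      have hftci : ∀ i : Fin n, θ s i - θ t i = ∫ u in t..s, -(g u * Γ.mulVec (ψ u) i) := by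
        intro i
        rw [intervalIntegral.integral_eq_sub_of_hasDerivAt
          (fun x hx => hθd i x (hsub2 hx)) ((hintc i).intervalIntegrable)]
      have hswap : ∑ i, ψ s i * (θ s i - θ t i)
          = ∫ u in t..s, ∑ i, ψ s i * (-(g u * Γ.mulVec (ψ u) i)) := by
        rw [intervalIntegral.integral_finset_sum]
        · apply Finset.sum_congr rfl
          intro i _
          rw [hftci i, ← intervalIntegral.integral_const_mul]
        · intro i _
          exact ((hintc i).intervalIntegrable).const_mul _
      rw [hswap]
      calc |∫ u in t..s, ∑ i, ψ s i * (-(g u * Γ.mulVec (ψ u) i))|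
          ≤ ∫ u in t..s, |∑ i, ψ s i * (-(g u * Γ.mulVec (ψ u) i))| :=
            intervalIntegral.abs_integral_le_integral_abs hts
        _ ≤ ∫ u in t..s, K * |g u| := by
            apply intervalIntegral.integral_mono_on hts _ _ (fun u _ => hgb s u)
            · apply IntervalIntegrable.abs
              apply ContinuousOn.intervalIntegrable
              apply continuousOn_finset_sum
              intro i _
              exact (continuousOn_const.mul (hintc i))
            · exact ((hgcont.mono hsub2).abs.intervalIntegrable).const_mul K
        _ ≤ ∫ u in t..(t+T), K * |g u| := by
            apply intervalIntegral.integral_mono_interval le_rfl hts hst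
            · filter_upwards with u
              positivity
            · exact habsI.const_mul K
        _ = K * ∫ u in t..(t+T), |g u| := intervalIntegral.integral_const_mul K _
        _ ≤ M := by
            rw [hMdef]
            exact mul_le_mul_of_nonneg_left habs_int hK0
    -- step 3 : combine with PE
    have hM0 : 0 ≤ M := by
      rw [hMdef]
      apply mul_nonneg hK0
      have := hInonneg t ht
      positivity
    have hPEt := hPE t ht (θ t)
    have hptw : ∀ s ∈ Set.Icc t (t+T), (∑ i, ψ s i * θ t i)^2 ≤ 2*(g s)^2 + 2*M^2 := by
      intro s hs
      have hd := hdiff s hs.1 hs.2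
      have hsplit : ∑ i, ψ s i * θ t i = g s - ∑ i, ψ s i * (θ s i - θ t i) := by
        simp only [hgdef, mul_sub, Finset.sum_sub_distrib]
        ring
      rw [hsplit]
      have h1 := abs_le.1 hd
      nlinarith [sq_nonneg (g s + ∑ i, ψ s i * (θ s i - θ t i)), h1.1, h1.2]
    have hLHSI : IntervalIntegrable (fun s => (∑ i, ψ s i * θ t i)^2) volume t (t+T) := by
      apply Continuous.intervalIntegrable
      apply Continuous.pow
      exact continuous_finset_sum _ fun i _ =>
        ((EuclideanSpace.proj (𝕜 := ℝ) i).continuous.comp hψcont).mul continuous_const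
    have hRHSI : IntervalIntegrable (fun s => 2*(g s)^2 + 2*M^2) volume t (t+T) :=
      (hg2I.const_mul 2).add intervalIntegrable_const
    calc δ * ‖θ t‖^2 ≤ ∫ s in t..(t+T), (∑ i, ψ s i * θ t i)^2 := hPEt
      _ ≤ ∫ s in t..(t+T), (2*(g s)^2 + 2*M^2) :=
          intervalIntegral.integral_mono_on httT hLHSI hRHSI hptw
      _ = 2 * I t + 2*T*M^2 := by
          rw [intervalIntegral.integral_add (hg2I.const_mul 2) intervalIntegrable_const,
            intervalIntegral.integral_const_mul, intervalIntegral.integral_const, hIdef]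
          simp
          ring
  have hkey : ∀ t : ℝ, 0 ≤ t →
      δ * ‖θ t‖^2 ≤ 2*(I t) + 2*T*(K*((1+T)/2*Real.sqrt (I t)))^2 := by
    intro t ht
    set q : ℝ := Real.sqrt (I t) with hq
    have hq0 : 0 ≤ q := Real.sqrt_nonneg _
    have hqq : q * q = I t := Real.mul_self_sqrt (hInonneg t ht)
    set F : ℝ → ℝ := fun ρ => 2*(I t) + 2*T*(K*(q/2 + (q+ρ)*T/2))^2 with hF
    have hFcont : Continuous F := by fun_prop
    have hFbound : ∀ ρ : ℝ, 0 < ρ → δ * ‖θ t‖^2 ≤ F ρ := by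
      intro ρ hρ
      have hη : 0 < q + ρ := by linarith
      refine le_trans (hkey' t ht (q+ρ) hη) ?_
      have hdiv : I t/(2*(q+ρ)) ≤ q/2 := by
        rw [div_le_div_iff₀ (by positivity) (by norm_num)]
        nlinarith
      have hinner : 0 ≤ I t/(2*(q+ρ)) + (q+ρ)*T/2 := by
        have := hInonneg t ht
        positivity
      have h2 : K*(I t/(2*(q+ρ)) + (q+ρ)*T/2) ≤ K*(q/2 + (q+ρ)*T/2) := by
        apply mul_le_mul_of_nonneg_left _ hK0
        linarith
      have h3 : (K*(I t/(2*(q+ρ)) + (q+ρ)*T/2))^2 ≤ (K*(q/2 + (q+ρ)*T/2))^2 := by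
        apply pow_le_pow_left₀ (mul_nonneg hK0 hinner) h2
      rw [hF]
      have h4 : 2*T*(K*(I t/(2*(q+ρ)) + (q+ρ)*T/2))^2 ≤ 2*T*(K*(q/2 + (q+ρ)*T/2))^2 := by
        apply mul_le_mul_of_nonneg_left h3 (by positivity)
      linarith
    have hFt : Filter.Tendsto F (nhdsWithin 0 (Set.Ioi 0)) (nhds (F 0)) :=
      (hFcont.tendsto 0).mono_left nhdsWithin_le_nhds
    have hev : ∀ᶠ ρ in nhdsWithin (0:ℝ) (Set.Ioi 0), δ * ‖θ t‖^2 ≤ F ρ := by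
      filter_upwards [self_mem_nhdsWithin] with ρ hρ
      exact hFbound ρ hρ
    have := ge_of_tendsto hFt hev
    refine le_trans this ?_
    rw [hF]
    simp only [add_zero]
    apply le_of_eq
    ring
  -- conclude
  have hBtend : Tendsto (fun t => (2*(I t) + 2*T*(K*((1+T)/2*Real.sqrt (I t)))^2)/δ)
      atTop (nhds 0) := by
    have hΦ : Continuous (fun x : ℝ => (2*x + 2*T*(K*((1+T)/2*Real.sqrt x))^2)/δ) := by
      fun_prop
    have := (hΦ.tendsto 0).comp hItend
    simpa [Function.comp_def] using this
  have hsq : Tendsto (fun t => ‖θ t‖^2) atTop (nhds 0) := by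
    apply tendsto_of_tendsto_of_tendsto_of_le_of_le' tendsto_const_nhds hBtend
    · filter_upwards with u
      positivity
    · filter_upwards [eventually_ge_atTop (0:ℝ)] with u hu
      rw [le_div_iff₀ hδ]
      linarith [hkey u hu]
  have hnorm : Tendsto (fun t => ‖θ t‖) atTop (nhds 0) := by
    have h := (Real.continuous_sqrt.tendsto 0).comp hsq
    simp only [Function.comp_def] at h
    rw [Real.sqrt_zero] at h
    apply h.congr
    intro u
    show Real.sqrt (‖θ u‖^2) = ‖θ u‖
    exact Real.sqrt_sq (norm_nonneg _)
  exact tendsto_zero_iff_norm_tendsto_zero.2 hnorm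
end

section
/- Cascade exponential convergence (Lyapunov step of Proposition 7): let A ∈ ℝ^{n×n} be Hurwitz, P symmetric positive definite with P A + Aᵀ P = −ℓ₁ I for some ℓ₁ > 0, and let z : [0,∞) → ℝⁿ be a bounded differentiable curve satisfying ż = A z + d(t), where |d(t)| ≤ ℓ₃ |w(t)| for some ℓ₃ > 0 and w(t) → 0 exponentially (|w(t)| ≤ C e^{−μ t} with μ > 0). Then z(t) → 0 as t → ∞. -/
open Filter Set

lemma toEuc_mul {n : ℕ} (M N : Matrix (Fin n) (Fin n) ℝ) (x : EuclideanSpace ℝ (Fin n)) :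
    Matrix.toEuclideanLin (M * N) x = Matrix.toEuclideanLin M (Matrix.toEuclideanLin N x) := by
  simp [Matrix.toEuclideanLin_apply, Matrix.mulVec_mulVec]

lemma conjT_eq_transpose {n : ℕ} (M : Matrix (Fin n) (Fin n) ℝ) :
    M.conjTranspose = M.transpose := by
  ext i j; simp [Matrix.conjTranspose_apply]

lemma inner_toEuc_pos {n : ℕ} (P : Matrix (Fin n) (Fin n) ℝ) (hP : P.PosDef)
    (x : EuclideanSpace ℝ (Fin n)) (hx : x ≠ 0) :
    0 < (inner ℝ x (Matrix.toEuclideanLin P x) : ℝ) := by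
  have h := hP.dotProduct_mulVec_pos (x := (WithLp.equiv 2 (Fin n → ℝ)) x) (by simpa using hx)
  simpa [PiLp.inner_apply, Matrix.toEuclideanLin_apply, dotProduct, mul_comm] using h

lemma coercive {n : ℕ} (T : EuclideanSpace ℝ (Fin n) →L[ℝ] EuclideanSpace ℝ (Fin n))
    (hpos : ∀ x : EuclideanSpace ℝ (Fin n), x ≠ 0 → 0 < (inner ℝ x (T x) : ℝ)) :
    ∃ c : ℝ, 0 < c ∧ ∀ x : EuclideanSpace ℝ (Fin n), c * ‖x‖ ^ 2 ≤ (inner ℝ x (T x) : ℝ) := by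
  rcases subsingleton_or_nontrivial (EuclideanSpace ℝ (Fin n)) with h | h
  · refine ⟨1, one_pos, fun x => ?_⟩
    have hx : x = 0 := Subsingleton.elim x 0
    simp [hx]
  · have hco : Continuous fun x : EuclideanSpace ℝ (Fin n) => (inner ℝ x (T x) : ℝ) :=
      continuous_id.inner T.continuous
    obtain ⟨a, haS, ha⟩ := (isCompact_sphere (0 : EuclideanSpace ℝ (Fin n)) 1).exists_isMinOn
      (NormedSpace.sphere_nonempty.mpr zero_le_one) hco.continuousOn
    have hna : ‖a‖ = 1 := mem_sphere_zero_iff_norm.mp haS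
    have ha0 : a ≠ 0 := by intro h0; rw [h0] at hna; simp at hna
    refine ⟨_, hpos a ha0, fun x => ?_⟩
    by_cases hx : x = 0
    · simp [hx]
    · have hnx : ‖x‖ ≠ 0 := norm_ne_zero_iff.mpr hx
      set u : EuclideanSpace ℝ (Fin n) := ‖x‖⁻¹ • x with hu_def
      have hu : ‖u‖ = 1 := by
        rw [hu_def, norm_smul, norm_inv, norm_norm, inv_mul_cancel₀ hnx]
      have hmem : u ∈ Metric.sphere (0 : EuclideanSpace ℝ (Fin n)) 1 :=
        mem_sphere_zero_iff_norm.mpr hu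
      have hmin : (inner ℝ a (T a) : ℝ) ≤ inner ℝ u (T u) := ha hmem
      have hx' : x = ‖x‖ • u := by
        rw [hu_def, smul_smul, mul_inv_cancel₀ hnx, one_smul]
      have hexp : (inner ℝ x (T x) : ℝ) = ‖x‖ ^ 2 * inner ℝ u (T u) := by
        conv_lhs => rw [hx']
        rw [map_smul, real_inner_smul_left, real_inner_smul_right]
        ring
      rw [hexp]
      nlinarith [sq_nonneg ‖x‖]

lemma conjT_eq_transpose' {n : ℕ} (M : Matrix (Fin n) (Fin n) ℝ) :
    M.conjTranspose = M.transpose := by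
  ext i j; simp [Matrix.conjTranspose_apply]

lemma toEuc_mul' {n : ℕ} (M N : Matrix (Fin n) (Fin n) ℝ) (x : EuclideanSpace ℝ (Fin n)) :
    Matrix.toEuclideanLin (M * N) x = Matrix.toEuclideanLin M (Matrix.toEuclideanLin N x) := by
  simp [Matrix.toEuclideanLin_apply, Matrix.mulVec_mulVec]

lemma inner_adj {n : ℕ} (M : Matrix (Fin n) (Fin n) ℝ) (x y : EuclideanSpace ℝ (Fin n)) :
    (inner ℝ (Matrix.toEuclideanLin M x) y : ℝ) = inner ℝ x (Matrix.toEuclideanLin M.transpose y) := by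
  rw [← conjT_eq_transpose', Matrix.toEuclideanLin_conjTranspose_eq_adjoint,
    LinearMap.adjoint_inner_right]

lemma psymm_inner {n : ℕ} (P : Matrix (Fin n) (Fin n) ℝ) (hPsymm : P.IsSymm)
    (x y : EuclideanSpace ℝ (Fin n)) :
    (inner ℝ x (Matrix.toEuclideanLin P y) : ℝ) = inner ℝ y (Matrix.toEuclideanLin P x) := by
  rw [real_inner_comm, inner_adj, hPsymm.eq, real_inner_comm]

lemma quad_ident {n : ℕ} (A P : Matrix (Fin n) (Fin n) ℝ) (ℓ₁ : ℝ)
    (hLyap : P * A + A.transpose * P = -(ℓ₁ • (1 : Matrix (Fin n) (Fin n) ℝ)))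
    (x : EuclideanSpace ℝ (Fin n)) :
    (inner ℝ (Matrix.toEuclideanLin A x) (Matrix.toEuclideanLin P x) : ℝ)
      + inner ℝ x (Matrix.toEuclideanLin P (Matrix.toEuclideanLin A x)) = -(ℓ₁ * ‖x‖ ^ 2) := by
  rw [inner_adj, ← toEuc_mul', ← toEuc_mul', ← inner_add_right]
  have hadd : Matrix.toEuclideanLin (A.transpose * P) x + Matrix.toEuclideanLin (P * A) x
      = Matrix.toEuclideanLin (A.transpose * P + P * A) x := by
    rw [map_add]; rfl
  rw [hadd, add_comm (A.transpose * P), hLyap]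
  have : Matrix.toEuclideanLin (-(ℓ₁ • (1 : Matrix (Fin n) (Fin n) ℝ))) x = -(ℓ₁ • x) := by
    simp [Matrix.toEuclideanLin_apply, Matrix.smul_mulVec]
  rw [this, inner_neg_right, real_inner_smul_right, real_inner_self_eq_norm_sq]

set_option maxHeartbeats 1000000 in
/-- Cascade exponential convergence (Lyapunov step of Proposition 7). -/
theorem stmt_6 {n : ℕ}
    (A : Matrix (Fin n) (Fin n) ℝ)
    (hHurwitz : ∀ z ∈ spectrum ℂ (A.map (Complex.ofReal : ℝ → ℂ)), z.re < 0)
    (P : Matrix (Fin n) (Fin n) ℝ) (hP : P.PosDef) (hPsymm : P.IsSymm)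
    (ℓ₁ : ℝ) (hℓ₁ : 0 < ℓ₁) (hLyap : P * A + A.transpose * P = -(ℓ₁ • (1 : Matrix (Fin n) (Fin n) ℝ)))
    {k : ℕ}
    (d : ℝ → EuclideanSpace ℝ (Fin n)) (hd : Continuous d)
    (w : ℝ → EuclideanSpace ℝ (Fin k)) (hw : Continuous w)
    (ℓ₃ : ℝ) (hℓ₃ : 0 < ℓ₃) (hdw : ∀ t : ℝ, 0 ≤ t → ‖d t‖ ≤ ℓ₃ * ‖w t‖)
    (C μ : ℝ) (hμ : 0 < μ) (hwexp : ∀ t : ℝ, 0 ≤ t → ‖w t‖ ≤ C * Real.exp (-μ * t))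
    (z : ℝ → EuclideanSpace ℝ (Fin n))
    (hzbdd : ∃ Cz : ℝ, ∀ t : ℝ, 0 ≤ t → ‖z t‖ ≤ Cz)
    (hz : ∀ t : ℝ, 0 ≤ t →
      HasDerivAt z (Matrix.toEuclideanLin A (z t) + d t) t) :
    Filter.Tendsto z Filter.atTop (nhds 0) := by
  obtain ⟨Cz, hCz⟩ := hzbdd
  set Pl : EuclideanSpace ℝ (Fin n) →L[ℝ] EuclideanSpace ℝ (Fin n) :=
    LinearMap.toContinuousLinearMap (Matrix.toEuclideanLin P) with hPl_def
  have hPl : ∀ x, Pl x = Matrix.toEuclideanLin P x := fun x => rfl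
  obtain ⟨lm, hlm, hcoer⟩ := coercive Pl (fun x hx => inner_toEuc_pos P hP x hx)
  set lM : ℝ := ‖Pl‖ + 1 with hlM_def
  have hlM : 0 < lM := by positivity
  have hVle : ∀ x : EuclideanSpace ℝ (Fin n), (inner ℝ x (Pl x) : ℝ) ≤ lM * ‖x‖ ^ 2 := by
    intro x
    have h1 : (inner ℝ x (Pl x) : ℝ) ≤ ‖x‖ * ‖Pl x‖ := real_inner_le_norm x (Pl x)
    have h2 : ‖Pl x‖ ≤ ‖Pl‖ * ‖x‖ := Pl.le_opNorm x
    nlinarith [norm_nonneg x, norm_nonneg (Pl x)]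
  set c : ℝ := ℓ₁ / lM with hc_def
  have hc : 0 < c := div_pos hℓ₁ hlM
  set ν : ℝ := min μ (c / 2) with hν_def
  have hν : 0 < ν := lt_min hμ (by linarith)
  have hνc : 0 < c - ν := by
    have : ν ≤ c / 2 := min_le_right _ _
    linarith
  have hνμ : ν ≤ μ := min_le_left _ _
  have hC0 : 0 ≤ C := le_trans (norm_nonneg _) (by simpa using hwexp 0 le_rfl)
  have hCz0 : 0 ≤ Cz := le_trans (norm_nonneg _) (hCz 0 le_rfl)
  set K : ℝ := 2 * ℓ₃ * C * ‖Pl‖ * Cz + 1 with hK_def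
  have hK : 0 < K := by
    have : (0:ℝ) ≤ 2 * ℓ₃ * C * ‖Pl‖ * Cz := by positivity
    linarith
  set V : ℝ → ℝ := fun t => (inner ℝ (z t) (Pl (z t)) : ℝ) with hV_def
  have hzc : ContinuousOn z (Set.Ici (0:ℝ)) := fun t ht =>
    ((hz t ht).continuousAt).continuousWithinAt
  have hVc : ContinuousOn V (Set.Ici (0:ℝ)) :=
    ContinuousOn.inner hzc (Pl.continuous.comp_continuousOn hzc)
  -- derivative of V
  have hVderiv : ∀ t : ℝ, 0 ≤ t →
      HasDerivAt V (-(ℓ₁ * ‖z t‖ ^ 2) + 2 * (inner ℝ (d t) (Pl (z t)) : ℝ)) t := by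
    intro t ht
    have hz' := hz t ht
    have hPz : HasDerivAt (fun s => Pl (z s)) (Pl (Matrix.toEuclideanLin A (z t) + d t)) t :=
      Pl.hasFDerivAt.comp_hasDerivAt t hz'
    have h := HasDerivAt.inner ℝ hz' hPz
    refine h.congr_deriv ?_
    rw [map_add, inner_add_right, inner_add_left]
    have hq := quad_ident A P ℓ₁ hLyap (z t)
    have hs := psymm_inner P hPsymm (z t) (d t)
    simp only [hPl]
    linarith
  -- differential inequality
  have hDineq : ∀ t : ℝ, 0 ≤ t →
      -(ℓ₁ * ‖z t‖ ^ 2) + 2 * (inner ℝ (d t) (Pl (z t)) : ℝ)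
        ≤ -(c * V t) + K * Real.exp (-ν * t) := by
    intro t ht
    have hble : c * V t ≤ ℓ₁ * ‖z t‖ ^ 2 := by
      have h1 : V t ≤ lM * ‖z t‖ ^ 2 := hVle (z t)
      have h2 : c * lM = ℓ₁ := div_mul_cancel₀ _ (ne_of_gt hlM)
      nlinarith
    have hexp : Real.exp (-μ * t) ≤ Real.exp (-ν * t) := by
      apply Real.exp_le_exp.mpr
      nlinarith
    have hdt : ‖d t‖ ≤ ℓ₃ * C * Real.exp (-ν * t) := by
      calc ‖d t‖ ≤ ℓ₃ * ‖w t‖ := hdw t ht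
        _ ≤ ℓ₃ * (C * Real.exp (-μ * t)) :=
            mul_le_mul_of_nonneg_left (hwexp t ht) (le_of_lt hℓ₃)
        _ ≤ ℓ₃ * C * Real.exp (-ν * t) := by
            rw [mul_assoc]
            exact mul_le_mul_of_nonneg_left
              (mul_le_mul_of_nonneg_left hexp hC0) (le_of_lt hℓ₃)
    have hip : (inner ℝ (d t) (Pl (z t)) : ℝ) ≤ ‖d t‖ * (‖Pl‖ * ‖z t‖) := by
      calc (inner ℝ (d t) (Pl (z t)) : ℝ) ≤ ‖d t‖ * ‖Pl (z t)‖ := real_inner_le_norm _ _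
        _ ≤ ‖d t‖ * (‖Pl‖ * ‖z t‖) :=
            mul_le_mul_of_nonneg_left (Pl.le_opNorm (z t)) (norm_nonneg _)
    have hzt : ‖z t‖ ≤ Cz := hCz t ht
    have hePos : 0 < Real.exp (-ν * t) := Real.exp_pos _
    have hPlnn : (0:ℝ) ≤ ‖Pl‖ := norm_nonneg _
    have hdtnn : (0:ℝ) ≤ ‖d t‖ := norm_nonneg _
    have hztnn : (0:ℝ) ≤ ‖z t‖ := norm_nonneg _
    have h2ip : 2 * (inner ℝ (d t) (Pl (z t)) : ℝ) ≤ K * Real.exp (-ν * t) := by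
      have hb : ‖d t‖ * (‖Pl‖ * ‖z t‖) ≤ (ℓ₃ * C * Real.exp (-ν * t)) * (‖Pl‖ * Cz) :=
        mul_le_mul hdt (mul_le_mul_of_nonneg_left hzt hPlnn)
          (mul_nonneg hPlnn hztnn)
          (mul_nonneg (mul_nonneg hℓ₃.le hC0) hePos.le)
      have heq : 2 * ((ℓ₃ * C * Real.exp (-ν * t)) * (‖Pl‖ * Cz))
          = (2 * ℓ₃ * C * ‖Pl‖ * Cz) * Real.exp (-ν * t) := by ring
      have : 2 * ((ℓ₃ * C * Real.exp (-ν * t)) * (‖Pl‖ * Cz)) ≤ K * Real.exp (-ν * t) := by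
        rw [heq, hK_def]
        nlinarith [hePos]
      linarith
    linarith
  -- the auxiliary decreasing function
  set R : ℝ := K / (c - ν) with hR_def
  set U : ℝ → ℝ := fun t => Real.exp (c * t) * V t - R * Real.exp ((c - ν) * t) with hU_def
  have hUderiv : ∀ t : ℝ, 0 ≤ t →
      HasDerivAt U (Real.exp (c * t) * c * V t
        + Real.exp (c * t) * (-(ℓ₁ * ‖z t‖ ^ 2) + 2 * (inner ℝ (d t) (Pl (z t)) : ℝ))
        - R * (Real.exp ((c - ν) * t) * (c - ν))) t := by
    intro t ht
    have he : HasDerivAt (fun s : ℝ => Real.exp (c * s)) (Real.exp (c * t) * c) t := by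
      simpa using (((hasDerivAt_id t).const_mul c).exp)
    have he2 : HasDerivAt (fun s : ℝ => Real.exp ((c - ν) * s))
        (Real.exp ((c - ν) * t) * (c - ν)) t := by
      simpa using (((hasDerivAt_id t).const_mul (c - ν)).exp)
    have h1 := he.mul (hVderiv t ht)
    have h2 := (he2.const_mul R)
    exact h1.sub h2
  have hec : ∀ a : ℝ, Continuous fun t : ℝ => Real.exp (a * t) := fun a =>
    Real.continuous_exp.comp (continuous_const.mul continuous_id)
  have hUc : ContinuousOn (fun t => Real.exp (c * t) * V t
      - R * Real.exp ((c - ν) * t)) (Set.Ici (0:ℝ)) :=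
    (((hec c).continuousOn.mul hVc).sub
      (continuous_const.mul (hec (c - ν))).continuousOn)
  have hUanti : AntitoneOn U (Set.Ici (0:ℝ)) := by
    apply antitoneOn_of_deriv_nonpos (convex_Ici 0)
    · exact hUc
    · intro t ht
      rw [interior_Ici] at ht
      exact ((hUderiv t (le_of_lt ht)).differentiableAt).differentiableWithinAt
    · intro t ht
      rw [interior_Ici] at ht
      have ht' : (0:ℝ) ≤ t := le_of_lt ht
      rw [(hUderiv t ht').deriv]
      have hd1 := hDineq t ht'
      have heP : 0 < Real.exp (c * t) := Real.exp_pos _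
      have hkey : Real.exp (c * t) * (-(ℓ₁ * ‖z t‖ ^ 2) + 2 * (inner ℝ (d t) (Pl (z t)) : ℝ))
          ≤ Real.exp (c * t) * (-(c * V t) + K * Real.exp (-ν * t)) :=
        mul_le_mul_of_nonneg_left hd1 (le_of_lt heP)
      have hee : Real.exp (c * t) * Real.exp (-ν * t) = Real.exp ((c - ν) * t) := by
        rw [← Real.exp_add]; ring_nf
      have hRK : R * (c - ν) = K := div_mul_cancel₀ _ (ne_of_gt hνc)
      nlinarith [Real.exp_pos ((c - ν) * t)]
  -- exponential bound on V
  have hVbound : ∀ t : ℝ, 0 ≤ t →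
      V t ≤ (V 0 - R) * Real.exp (-(c * t)) + R * Real.exp (-(ν * t)) := by
    intro t ht
    have hU0 : U t ≤ U 0 := hUanti (Set.self_mem_Ici) ht ht
    have hU0v : U 0 = V 0 - R := by simp [hU_def]
    rw [hU0v] at hU0
    have heP : 0 < Real.exp (c * t) := Real.exp_pos _
    have h1 : Real.exp (c * t) * V t ≤ V 0 - R + R * Real.exp ((c - ν) * t) := by
      have := hU0
      simp only [hU_def] at this
      linarith
    have h2 := mul_le_mul_of_nonneg_right h1 (le_of_lt (Real.exp_pos (-(c * t))))
    have hee1 : Real.exp (c * t) * Real.exp (-(c * t)) = 1 := by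
      rw [← Real.exp_add]; ring_nf; exact Real.exp_zero
    have hee2 : Real.exp ((c - ν) * t) * Real.exp (-(c * t)) = Real.exp (-(ν * t)) := by
      rw [← Real.exp_add]; ring_nf
    calc V t = Real.exp (c * t) * V t * Real.exp (-(c * t)) := by
          rw [mul_comm (Real.exp (c * t)) (V t), mul_assoc, hee1, mul_one]
      _ ≤ (V 0 - R + R * Real.exp ((c - ν) * t)) * Real.exp (-(c * t)) := h2
      _ = (V 0 - R) * Real.exp (-(c * t)) + R * Real.exp (-(ν * t)) := by
          rw [add_mul, mul_assoc, hee2]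
  -- squeeze ‖z t‖² → 0
  have hB : Filter.Tendsto (fun t : ℝ =>
      ((V 0 - R) * Real.exp (-(c * t)) + R * Real.exp (-(ν * t))) / lm)
      Filter.atTop (nhds 0) := by
    have key : ∀ a : ℝ, 0 < a →
        Filter.Tendsto (fun t : ℝ => Real.exp (-(a * t))) Filter.atTop (nhds 0) := by
      intro a ha
      have h1 : Filter.Tendsto (fun t : ℝ => a * t) Filter.atTop Filter.atTop :=
        Filter.Tendsto.const_mul_atTop ha Filter.tendsto_id
      have h2 : Filter.Tendsto (fun t : ℝ => -(a * t)) Filter.atTop Filter.atBot :=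
        Filter.tendsto_neg_atTop_atBot.comp h1
      exact Real.tendsto_exp_atBot.comp h2
    have h1 := key c hc
    have h2 := key ν hν
    have := ((h1.const_mul (V 0 - R)).add (h2.const_mul R)).div_const lm
    simpa using this
  have hsq : Filter.Tendsto (fun t : ℝ => ‖z t‖ ^ 2) Filter.atTop (nhds 0) := by
    apply tendsto_of_tendsto_of_tendsto_of_le_of_le' tendsto_const_nhds hB
    · filter_upwards [Filter.eventually_ge_atTop (0:ℝ)] with t ht
      positivity
    · filter_upwards [Filter.eventually_ge_atTop (0:ℝ)] with t ht
      have h2 := hVbound t ht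
      rw [le_div_iff₀ hlm]
      have := hcoer (z t)
      linarith
  have hnorm : Filter.Tendsto (fun t : ℝ => ‖z t‖) Filter.atTop (nhds 0) := by
    have h := (Real.continuous_sqrt.tendsto 0).comp hsq
    rw [Real.sqrt_zero] at h
    exact h.congr fun t => by
      simp [Function.comp, Real.sqrt_sq (norm_nonneg _)]
  exact tendsto_zero_iff_norm_tendsto_zero.mpr hnorm
end

section
/- Comparison-lemma step: let V : [0,∞) → ℝ be differentiable with V(t) ≥ 0, and suppose V̇(t) ≤ −a V(t) + b(t)√(V(t)) for all t, where a > 0 and b is continuous with b(t) → 0 as t → ∞. Then V(t) → 0 as t → ∞. -/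
open Real Filter intervalIntegral

private lemma key14 (V : ℝ → ℝ) (hVnonneg : ∀ t : ℝ, 0 ≤ V t)
    (dV : ℝ → ℝ) (hV : ∀ t : ℝ, HasDerivAt V (dV t) t)
    (a : ℝ) (ha : 0 < a) (b : ℝ → ℝ) (hb : Continuous b)
    (hineq : ∀ t : ℝ, dV t ≤ -a * V t + b t * Real.sqrt (V t))
    (s t : ℝ) (hst : s ≤ t) :
    Real.exp (a*t/2) * Real.sqrt (V t)
      ≤ Real.exp (a*s/2) * Real.sqrt (V s)
        + ∫ τ in s..t, |b τ| * Real.exp (a*τ/2) / 2 := by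
  have hsqrt_exp : ∀ u : ℝ, Real.sqrt (Real.exp (a*u)) = Real.exp (a*u/2) := by
    intro u
    rw [show Real.exp (a*u) = Real.exp (a*u/2) ^ 2 by
      rw [sq, ← Real.exp_add]; ring_nf]
    exact Real.sqrt_sq (Real.exp_pos _).le
  set g : ℝ → ℝ := fun τ => |b τ| * Real.exp (a*τ/2) / 2 with hg
  have hgcont : Continuous g := by
    apply Continuous.div_const
    exact hb.abs.mul (Real.continuous_exp.comp (by continuity))
  have main : ∀ η : ℝ, 0 < η →
      Real.sqrt (Real.exp (a*t) * V t + η)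
        ≤ Real.sqrt (Real.exp (a*s) * V s + η) + ∫ τ in s..t, g τ := by
    intro η hη
    set U : ℝ → ℝ := fun τ => Real.exp (a*τ) * V τ + η with hUdef
    have hUpos : ∀ τ, 0 < U τ := fun τ =>
      add_pos_of_nonneg_of_pos (mul_nonneg (Real.exp_pos _).le (hVnonneg τ)) hη
    have hU : ∀ τ, HasDerivAt U (Real.exp (a*τ) * (dV τ + a * V τ)) τ := by
      intro τ
      have h1 : HasDerivAt (fun u => Real.exp (a*u)) (a * Real.exp (a*τ)) τ := by
        simpa [mul_comm, Function.comp_def] using (Real.hasDerivAt_exp (a*τ)).comp τ ((hasDerivAt_id τ).const_mul a)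
      have := (h1.mul (hV τ)).add_const η
      exact this.congr_deriv (by ring)
    set φ : ℝ → ℝ := fun τ => Real.sqrt (U τ) with hφdef
    have hφ : ∀ τ, HasDerivAt φ
        (1 / (2 * Real.sqrt (U τ)) * (Real.exp (a*τ) * (dV τ + a * V τ))) τ := by
      intro τ
      exact (Real.hasDerivAt_sqrt (ne_of_gt (hUpos τ))).comp τ (hU τ)
    have hφ' : ∀ τ, 1 / (2 * Real.sqrt (U τ)) * (Real.exp (a*τ) * (dV τ + a * V τ)) ≤ g τ := by
      intro τ
      have hsU : 0 < Real.sqrt (U τ) := Real.sqrt_pos.2 (hUpos τ)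
      have h1 : dV τ + a * V τ ≤ b τ * Real.sqrt (V τ) := by
        have := hineq τ; linarith
      have h2 : Real.exp (a*τ) * (dV τ + a * V τ)
          ≤ |b τ| * Real.exp (a*τ/2) * Real.sqrt (U τ) := by
        calc Real.exp (a*τ) * (dV τ + a * V τ)
            ≤ Real.exp (a*τ) * (b τ * Real.sqrt (V τ)) := by
              exact mul_le_mul_of_nonneg_left h1 (Real.exp_pos _).le
          _ ≤ Real.exp (a*τ) * (|b τ| * Real.sqrt (V τ)) := by
              have : b τ * Real.sqrt (V τ) ≤ |b τ| * Real.sqrt (V τ) :=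
                mul_le_mul_of_nonneg_right (le_abs_self _) (Real.sqrt_nonneg _)
              exact mul_le_mul_of_nonneg_left this (Real.exp_pos _).le
          _ = |b τ| * Real.exp (a*τ/2) * Real.sqrt (Real.exp (a*τ) * V τ) := by
              rw [Real.sqrt_mul (Real.exp_pos _).le, hsqrt_exp,
                show Real.exp (a*τ) = Real.exp (a*τ/2) * Real.exp (a*τ/2) by
                  rw [← Real.exp_add]; ring_nf]
              ring
          _ ≤ |b τ| * Real.exp (a*τ/2) * Real.sqrt (U τ) := by
              apply mul_le_mul_of_nonneg_left
              · exact Real.sqrt_le_sqrt (by simp [hUdef, hη.le])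
              · positivity
      calc 1 / (2 * Real.sqrt (U τ)) * (Real.exp (a*τ) * (dV τ + a * V τ))
          ≤ 1 / (2 * Real.sqrt (U τ)) * (|b τ| * Real.exp (a*τ/2) * Real.sqrt (U τ)) := by
            apply mul_le_mul_of_nonneg_left h2; positivity
        _ = g τ := by
            field_simp [hg]
            ring
    -- the comparison function
    set F : ℝ → ℝ := fun u => (∫ τ in s..u, g τ) - φ u with hF
    have hFderiv : ∀ u, HasDerivAt F
        (g u - 1 / (2 * Real.sqrt (U u)) * (Real.exp (a*u) * (dV u + a * V u))) u := by
      intro u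
      exact (intervalIntegral.integral_hasDerivAt_right
        (hgcont.intervalIntegrable s u)
        (hgcont.stronglyMeasurableAtFilter _ _)
        hgcont.continuousAt).sub (hφ u)
    have hFmono : Monotone F := by
      apply monotone_of_deriv_nonneg
      · exact fun u => (hFderiv u).differentiableAt
      · intro u
        rw [(hFderiv u).deriv]
        have := hφ' u; linarith
    have := hFmono hst
    simp only [hF, intervalIntegral.integral_same] at this
    have : φ t ≤ φ s + ∫ τ in s..t, g τ := by linarith
    simpa [hφdef, hUdef] using this
  -- pass to the limit η → 0
  have hlim : Real.sqrt (Real.exp (a*t) * V t)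
      ≤ Real.sqrt (Real.exp (a*s) * V s) + ∫ τ in s..t, g τ := by
    apply le_of_forall_pos_le_add
    intro ε hε
    have h1 := main (ε^2) (by positivity)
    have h2 : Real.sqrt (Real.exp (a*t) * V t) ≤ Real.sqrt (Real.exp (a*t) * V t + ε^2) :=
      Real.sqrt_le_sqrt (by nlinarith)
    have h3 : Real.sqrt (Real.exp (a*s) * V s + ε^2)
        ≤ Real.sqrt (Real.exp (a*s) * V s) + ε := by
      set x := Real.exp (a*s) * V s with hx
      have hx0 : 0 ≤ x := mul_nonneg (Real.exp_pos _).le (hVnonneg s)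
      have hsq : x + ε^2 ≤ (Real.sqrt x + ε)^2 := by
        have := Real.sq_sqrt hx0
        nlinarith [Real.sqrt_nonneg x]
      calc Real.sqrt (x + ε^2) ≤ Real.sqrt ((Real.sqrt x + ε)^2) := Real.sqrt_le_sqrt hsq
        _ = Real.sqrt x + ε := Real.sqrt_sq (by positivity)
    linarith
  have e1 : Real.sqrt (Real.exp (a*t) * V t) = Real.exp (a*t/2) * Real.sqrt (V t) := by
    rw [Real.sqrt_mul (Real.exp_pos _).le, hsqrt_exp]
  have e2 : Real.sqrt (Real.exp (a*s) * V s) = Real.exp (a*s/2) * Real.sqrt (V s) := by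
    rw [Real.sqrt_mul (Real.exp_pos _).le, hsqrt_exp]
  rw [e1, e2] at hlim
  exact hlim

/-- Comparison-lemma step: `V̇ ≤ -aV + b(t)√V` with `b(t) → 0` forces `V(t) → 0`. -/
theorem stmt_14 (V : ℝ → ℝ) (hVnonneg : ∀ t : ℝ, 0 ≤ V t)
    (dV : ℝ → ℝ) (hV : ∀ t : ℝ, HasDerivAt V (dV t) t)
    (a : ℝ) (ha : 0 < a)
    (b : ℝ → ℝ) (hb : Continuous b) (hb0 : Filter.Tendsto b Filter.atTop (nhds 0))
    (hineq : ∀ t : ℝ, dV t ≤ -a * V t + b t * Real.sqrt (V t)) :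
    Filter.Tendsto V Filter.atTop (nhds 0) := by
  have hsqrt : Filter.Tendsto (fun t => Real.sqrt (V t)) Filter.atTop (nhds 0) := by
    rw [Metric.tendsto_atTop]
    intro ε hε
    set δ : ℝ := a * ε / 4 with hδ
    have hδpos : 0 < δ := by positivity
    obtain ⟨s, hs⟩ := (Metric.tendsto_atTop.1 hb0) δ hδpos
    have hbound : ∀ t, s ≤ t → Real.sqrt (V t)
        ≤ Real.exp (a*s/2) * Real.sqrt (V s) * Real.exp (-(a*t/2)) + ε / 4 := by
      intro t ht
      have key := key14 V hVnonneg dV hV a ha b hb hineq s t ht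
      -- bound the integral
      have hint : (∫ τ in s..t, |b τ| * Real.exp (a*τ/2) / 2)
          ≤ (δ/a) * Real.exp (a*t/2) := by
        have hmono : (∫ τ in s..t, |b τ| * Real.exp (a*τ/2) / 2)
            ≤ ∫ τ in s..t, δ/2 * Real.exp (a*τ/2) := by
          apply intervalIntegral.integral_mono_on ht
          · exact ((hb.abs.mul (Real.continuous_exp.comp (by continuity))).div_const
              2).intervalIntegrable s t
          · exact ((continuous_const.mul (Real.continuous_exp.comp
              (by continuity))).intervalIntegrable s t)
          · intro x hx
            have hbx : |b x| ≤ δ := by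
              have := hs x hx.1
              rw [Real.dist_eq, sub_zero] at this
              exact this.le
            have := mul_le_mul_of_nonneg_right hbx (Real.exp_pos (a*x/2)).le
            linarith
        have hcalc : (∫ τ in s..t, δ/2 * Real.exp (a*τ/2))
            = (δ/a) * Real.exp (a*t/2) - (δ/a) * Real.exp (a*s/2) := by
          have hderiv : ∀ x ∈ Set.uIcc s t,
              HasDerivAt (fun τ => (δ/a) * Real.exp (a*τ/2)) (δ/2 * Real.exp (a*x/2)) x := by
            intro x _
            have h1 : HasDerivAt (fun τ : ℝ => a*τ/2) (a/2) x := by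
              simpa using ((hasDerivAt_id x).const_mul a).div_const 2
            have := ((Real.hasDerivAt_exp (a*x/2)).comp x h1).const_mul (δ/a)
            exact this.congr_deriv (by field_simp)
          rw [intervalIntegral.integral_eq_sub_of_hasDerivAt hderiv
            ((continuous_const.mul (Real.continuous_exp.comp
              (by continuity))).intervalIntegrable s t)]
        rw [hcalc] at hmono
        have : 0 ≤ (δ/a) * Real.exp (a*s/2) := by positivity
        linarith
      have hexp_pos : (0:ℝ) < Real.exp (a*t/2) := Real.exp_pos _
      have h2 : Real.exp (a*t/2) * Real.sqrt (V t)
          ≤ Real.exp (a*s/2) * Real.sqrt (V s) + (δ/a) * Real.exp (a*t/2) := by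
        linarith
      have h3 : δ / a = ε / 4 := by
        rw [hδ]; field_simp
      have h4 : Real.sqrt (V t) ≤ (Real.exp (a*s/2) * Real.sqrt (V s)
          + (δ/a) * Real.exp (a*t/2)) / Real.exp (a*t/2) :=
        (le_div_iff₀ hexp_pos).2 (by linarith [h2])
      calc Real.sqrt (V t)
          ≤ (Real.exp (a*s/2) * Real.sqrt (V s) + (δ/a) * Real.exp (a*t/2))
              / Real.exp (a*t/2) := h4
        _ = Real.exp (a*s/2) * Real.sqrt (V s) * Real.exp (-(a*t/2)) + δ/a := by
            rw [Real.exp_neg, ← div_eq_mul_inv, add_div,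
              mul_div_cancel_right₀ _ hexp_pos.ne']
        _ = Real.exp (a*s/2) * Real.sqrt (V s) * Real.exp (-(a*t/2)) + ε/4 := by rw [h3]
    -- the decay term eventually small
    set C : ℝ := Real.exp (a*s/2) * Real.sqrt (V s) with hC
    have hdecay : Filter.Tendsto (fun t => C * Real.exp (-(a*t/2))) Filter.atTop (nhds 0) := by
      have h1 : Filter.Tendsto (fun t : ℝ => a*t/2) Filter.atTop Filter.atTop := by
        apply Filter.Tendsto.atTop_div_const (by norm_num : (0:ℝ) < 2)
        exact Filter.tendsto_id.const_mul_atTop ha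
      have := (Real.tendsto_exp_neg_atTop_nhds_zero.comp h1).const_mul C
      simpa using this
    have hev : ∀ᶠ t in Filter.atTop, C * Real.exp (-(a*t/2)) < ε/4 := by
      have := hdecay (Iio_mem_nhds (show (0:ℝ) < ε/4 by positivity))
      filter_upwards [this] with t ht using ht
    obtain ⟨N, hN⟩ := hev.exists_forall_of_atTop
    refine ⟨max s N, fun t ht => ?_⟩
    have hts : s ≤ t := le_trans (le_max_left _ _) ht
    have htN : N ≤ t := le_trans (le_max_right _ _) ht
    rw [Real.dist_eq, sub_zero, abs_of_nonneg (Real.sqrt_nonneg _)]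
    have := hbound t hts
    have := hN t htN
    calc Real.sqrt (V t) ≤ C * Real.exp (-(a*t/2)) + ε/4 := hbound t hts
      _ < ε/4 + ε/4 := by linarith [hN t htN]
      _ < ε := by linarith
  have : V = fun t => Real.sqrt (V t) ^ 2 := funext fun t => (Real.sq_sqrt (hVnonneg t)).symm
  rw [this]
  have := hsqrt.pow 2
  simpa using this
end
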